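/- The ideal generated by the polynomial p₁q₁ + p₂q₂ + p₃q₃ in the polynomial ring ℂ[p₁,p₂,p₃,q₁,q₂,q₃] is a prime ideal. -/

import Mathlib

open MvPolynomial

/-- A linear polynomial `C a * X + C b` over a domain, where every common divisor
of `a` and `b` is a unit and `a ≠ 0`, is irreducible. -/
lemma linear_irreducible_aux {R : Type*} [CommRing R] [IsDomain R] {a b : R}
    (ha : a ≠ 0) (hcop : ∀ c : R, c ∣ a → c ∣ b → IsUnit c) :
    Irreducible (Polynomial.C a * Polynomial.X + Polynomial.C b) := by
  set p : Polynomial R := Polynomial.C a * Polynomial.X + Polynomial.C b with hp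
  have hdeg : p.natDegree = 1 := Polynomial.natDegree_linear ha
  constructor
  · exact Polynomial.not_isUnit_of_natDegree_pos p (by omega)
  · intro f g hfg
    have hf0 : f ≠ 0 := by rintro rfl; simp at hfg; rw [hfg] at hdeg; simp at hdeg
    have hg0 : g ≠ 0 := by rintro rfl; simp at hfg; rw [hfg] at hdeg; simp at hdeg
    have hdeg2 : f.natDegree + g.natDegree = 1 := by
      rw [← Polynomial.natDegree_mul hf0 hg0, ← hfg, hdeg]
    have key : ∀ f g : Polynomial R, p = f * g → f.natDegree = 0 → IsUnit f := by
      intro f g hfg hf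
      obtain ⟨c, rfl⟩ : ∃ c, f = Polynomial.C c :=
        ⟨f.coeff 0, Polynomial.eq_C_of_natDegree_eq_zero hf⟩
      have hca : c ∣ a := by
        have := congrArg (fun q => Polynomial.coeff q 1) hfg
        simp [hp, Polynomial.coeff_C_mul] at this
        exact ⟨_, this⟩
      have hcb : c ∣ b := by
        have := congrArg (fun q => Polynomial.coeff q 0) hfg
        simp [hp, Polynomial.coeff_C_mul] at this
        exact ⟨_, this⟩
      exact (Polynomial.isUnit_C).mpr (hcop c hca hcb)
    rcases Nat.eq_zero_or_pos f.natDegree with h | h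
    · exact Or.inl (key f g hfg h)
    · exact Or.inr (key g f (by rwa [mul_comm]) (by omega))

lemma mv_prime_X {n : ℕ} (i : Fin (n + 1)) :
    Prime (X i : MvPolynomial (Fin (n + 1)) ℂ) := by
  rw [← MulEquiv.prime_iff (renameEquiv ℂ (Equiv.swap i 0)).toMulEquiv]
  have : (renameEquiv ℂ (Equiv.swap i 0)).toMulEquiv (X i) = X 0 := by
    simp [renameEquiv_apply, rename_X]
  rw [this, ← MulEquiv.prime_iff (finSuccEquiv ℂ n).toMulEquiv]
  have : (finSuccEquiv ℂ n).toMulEquiv (X 0) = Polynomial.X := finSuccEquiv_X_zero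
  rw [this]
  exact Polynomial.prime_X

/-- The polynomial p·q = p₁q₁ + p₂q₂ + p₃q₃ in ℂ[p₁,p₂,p₃,q₁,q₂,q₃],
with variables indexed so that `X 0, X 1, X 2` are p₁,p₂,p₃ and
`X 3, X 4, X 5` are q₁,q₂,q₃. -/
noncomputable def pqPoly : MvPolynomial (Fin 6) ℂ :=
  X 0 * X 3 + X 1 * X 4 + X 2 * X 5

set_option maxHeartbeats 1000000 in
set_option synthInstance.maxHeartbeats 400000 in
lemma pq_prime : Prime pqPoly := by
  rw [← MulEquiv.prime_iff (finSuccEquiv ℂ 5).toMulEquiv]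
  have himg : (finSuccEquiv ℂ 5).toMulEquiv pqPoly =
      Polynomial.C (X 2) * Polynomial.X +
        Polynomial.C (X 0 * X 3 + X 1 * X 4 : MvPolynomial (Fin 5) ℂ) := by
    show (finSuccEquiv ℂ 5) pqPoly = _
    have h1 : (X 1 : MvPolynomial (Fin 6) ℂ) = X (Fin.succ 0) := rfl
    have h2 : (X 2 : MvPolynomial (Fin 6) ℂ) = X (Fin.succ 1) := rfl
    have h3 : (X 3 : MvPolynomial (Fin 6) ℂ) = X (Fin.succ 2) := rfl
    have h4 : (X 4 : MvPolynomial (Fin 6) ℂ) = X (Fin.succ 3) := rfl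
    have h5 : (X 5 : MvPolynomial (Fin 6) ℂ) = X (Fin.succ 4) := rfl
    simp only [pqPoly]
    rw [h1, h2, h3, h4, h5]
    simp only [map_add, map_mul, finSuccEquiv_X_zero, finSuccEquiv_X_succ]
    ring
  rw [himg]
  have hX2 : Prime (X 2 : MvPolynomial (Fin 5) ℂ) := mv_prime_X 2
  have hndvd : ¬ (X 2 : MvPolynomial (Fin 5) ℂ) ∣ (X 0 * X 3 + X 1 * X 4) := by
    intro ⟨k, hk⟩
    have := congrArg (eval (fun j : Fin 5 => if j = 2 then 0 else 1)) hk
    simp at this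
  have hirr : Irreducible (Polynomial.C (X 2 : MvPolynomial (Fin 5) ℂ) * Polynomial.X +
      Polynomial.C (X 0 * X 3 + X 1 * X 4)) := by
    apply linear_irreducible_aux hX2.ne_zero
    intro c hca hcb
    obtain ⟨k, hk⟩ := hca
    rcases hX2.irreducible.isUnit_or_isUnit hk with h | h
    · exact h
    · exfalso
      apply hndvd
      obtain ⟨u, rfl⟩ := h
      exact dvd_trans ⟨(↑u⁻¹ : MvPolynomial (Fin 5) ℂ), by rw [hk, mul_assoc]; simp⟩ hcb
  exact (UniqueFactorizationMonoid.irreducible_iff_prime).mp hirr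

theorem pq_ideal_isPrime :
    (Ideal.span {pqPoly} : Ideal (MvPolynomial (Fin 6) ℂ)).IsPrime := by
  rw [Ideal.span_singleton_prime pq_prime.ne_zero]
  exact pq_prime
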